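/- Let (X, h) be a representable polymatroid and let 0 ≤ ε ≤ h(X). Then the ε-perturbation g_ε, defined by g_ε(A) := min(h(A), h(X) − ε), is almost representable. If moreover ε is a nonnegative integer, then g_ε is representable. -/

import Mathlib

open Module Filter Topology
open scoped TensorProduct

/-- A representation of a rank function on ground set `X` by subspaces of a
finite-dimensional vector space `W` over a finite field `F`. -/
structure SubspaceRep {X : Type} (h : Finset X → ℝ) where
  F : Type
  W : Type
  [fieldF : Field F]
  [fintypeF : Fintype F]
  [addCommGroupW : AddCommGroup W]
  [moduleW : Module F W]
  [finiteDimensionalW : FiniteDimensional F W]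
  V : X → Submodule F W
  rank_eq : ∀ A : Finset X, h A = (Module.finrank F ↥(A.sup V) : ℝ)

/-- `h` is representable: it is `q`-representable for some prime power `q`
(equivalently, it is given by subspace dimensions over some finite field). -/
def IsRepresentable {X : Type} (h : Finset X → ℝ) : Prop := Nonempty (SubspaceRep h)

/-- `h` is even representable: `2^m`-representable for some positive integer `m`. -/
def EvenRepresentable {X : Type} (h : Finset X → ℝ) : Prop :=
  ∃ (r : SubspaceRep h) (m : ℕ), 0 < m ∧ Nat.card r.F = 2 ^ m

/-- `h` is odd representable: `p^m`-representable for some odd prime `p` and positive `m`. -/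
def OddRepresentable {X : Type} (h : Finset X → ℝ) : Prop :=
  ∃ (r : SubspaceRep h) (p m : ℕ), p.Prime ∧ Odd p ∧ 0 < m ∧ Nat.card r.F = p ^ m

/-- Polymatroid axioms: normalization, nonnegativity, monotonicity, submodularity. -/
def IsPolymatroid {X : Type} [DecidableEq X] (h : Finset X → ℝ) : Prop :=
  h ∅ = 0 ∧ (∀ A, 0 ≤ h A) ∧ (∀ A B : Finset X, A ⊆ B → h A ≤ h B) ∧
    ∀ A B : Finset X, h (A ∪ B) + h (A ∩ B) ≤ h A + h B

/-- The Ingleton expression `J_h(A1,A2,A3,A4)`. -/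
noncomputable def ingletonJ {X : Type} [DecidableEq X] (h : Finset X → ℝ)
    (A1 A2 A3 A4 : Finset X) : ℝ :=
  h (A1 ∪ A2) + h (A1 ∪ A3) + h (A1 ∪ A4) + h (A2 ∪ A3) + h (A2 ∪ A4)
    - h A1 - h A2 - h (A3 ∪ A4) - h (A1 ∪ A2 ∪ A3) - h (A1 ∪ A2 ∪ A4)

/-- `h` is Ingletonian if all Ingleton expressions are nonnegative. -/
def IsIngletonian {X : Type} [DecidableEq X] (h : Finset X → ℝ) : Prop :=
  ∀ A1 A2 A3 A4 : Finset X, 0 ≤ ingletonJ h A1 A2 A3 A4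

/-- The convex cone generated by a set `S` of rank functions (viewed as points of
`ℝ^{2^|X|}`): all finite nonnegative combinations of elements of `S`. -/
def coneHull {X : Type} (S : Set (Finset X → ℝ)) : Set (Finset X → ℝ) :=
  {x | ∃ (m : ℕ) (c : Fin m → ℝ) (f : Fin m → Finset X → ℝ),
    (∀ i, 0 ≤ c i) ∧ (∀ i, f i ∈ S) ∧ x = ∑ i, c i • f i}

/-- `h` is almost representable: a coordinatewise limit `h = lim_i c_i g_i` with
`c_i > 0` and each `g_i` representable. -/
def AlmostRepresentable {X : Type} (h : Finset X → ℝ) : Prop :=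
  ∃ (g : ℕ → Finset X → ℝ) (c : ℕ → ℝ), (∀ i, IsRepresentable (g i)) ∧
    (∀ i, 0 < c i) ∧ ∀ A : Finset X, Tendsto (fun i => c i * g i A) atTop (𝓝 (h A))

/-- `h` is almost even representable. -/
def AlmostEvenRepresentable {X : Type} (h : Finset X → ℝ) : Prop :=
  ∃ (g : ℕ → Finset X → ℝ) (c : ℕ → ℝ), (∀ i, EvenRepresentable (g i)) ∧
    (∀ i, 0 < c i) ∧ ∀ A : Finset X, Tendsto (fun i => c i * g i A) atTop (𝓝 (h A))

/-- `h` is almost odd representable. -/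
def AlmostOddRepresentable {X : Type} (h : Finset X → ℝ) : Prop :=
  ∃ (g : ℕ → Finset X → ℝ) (c : ℕ → ℝ), (∀ i, OddRepresentable (g i)) ∧
    (∀ i, 0 < c i) ∧ ∀ A : Finset X, Tendsto (fun i => c i * g i A) atTop (𝓝 (h A))

/-- `h` is cc-representable: it lies in the closure of the convex cone generated by
the set `Υ[X]` of representable rank functions on `X`. -/
def CcRepresentable {X : Type} (h : Finset X → ℝ) : Prop :=
  h ∈ closure (coneHull {g : Finset X → ℝ | IsRepresentable g})

/-- A matroid: an integer-valued polymatroid with `h(A) ≤ |A|`. -/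
def IsIntMatroid {X : Type} [DecidableEq X] (h : Finset X → ℝ) : Prop :=
  IsPolymatroid h ∧ (∀ A : Finset X, ∃ z : ℤ, h A = (z : ℝ)) ∧ ∀ A : Finset X, h A ≤ A.card

/-- A circuit of a matroid: a minimal dependent set. -/
def IsCircuit {X : Type} (h : Finset X → ℝ) (C : Finset X) : Prop :=
  h C < C.card ∧ ∀ D : Finset X, D ⊂ C → h D = D.card

/-- A connected matroid: every pair of distinct elements lies in a common circuit. -/
def IsConnectedMatroid {X : Type} [DecidableEq X] (h : Finset X → ℝ) : Prop :=
  IsIntMatroid h ∧ ∀ x y : X, x ≠ y → ∃ C : Finset X, IsCircuit h C ∧ x ∈ C ∧ y ∈ C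

section PerturbAux

variable {X : Type}

/-- `Finset.sup` commutes with `Submodule.map`. -/
lemma sup_submodule_map {F W W' : Type*} [Field F] [AddCommGroup W] [Module F W]
    [AddCommGroup W'] [Module F W'] (f : W →ₗ[F] W') (V : X → Submodule F W) (A : Finset X) :
    A.sup (fun i => (V i).map f) = (A.sup V).map f := by
  classical
  induction A using Finset.induction_on with
  | empty => simp
  | insert _ _ ha ih => simp [Finset.sup_insert, ih, Submodule.map_sup]

lemma baseChange_mono' {F F' W : Type*} [Field F] [Field F'] [Algebra F F']
    [AddCommGroup W] [Module F W] {p q : Submodule F W} (h : p ≤ q) :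
    p.baseChange F' ≤ q.baseChange F' :=
  Submodule.baseChange_mono F' h

lemma baseChange_sup' {F F' W : Type*} [Field F] [Field F'] [Algebra F F']
    [AddCommGroup W] [Module F W] (p q : Submodule F W) :
    (p ⊔ q).baseChange F' = p.baseChange F' ⊔ q.baseChange F' := by
  apply le_antisymm
  · rw [Submodule.baseChange_eq_span, Submodule.span_le]
    rintro x hx
    simp only [SetLike.mem_coe, Submodule.mem_map] at hx
    obtain ⟨m, hm, rfl⟩ := hx
    obtain ⟨a, ha, b, hb, rfl⟩ := Submodule.mem_sup.mp hm
    rw [map_add]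
    refine Submodule.add_mem _ ?_ ?_
    · exact Submodule.mem_sup_left (by
        simpa using Submodule.tmul_mem_baseChange_of_mem (1 : F') ha)
    · exact Submodule.mem_sup_right (by
        simpa using Submodule.tmul_mem_baseChange_of_mem (1 : F') hb)
  · exact sup_le (baseChange_mono' le_sup_left) (baseChange_mono' le_sup_right)

lemma sup_baseChange {F F' W : Type*} [Field F] [Field F'] [Algebra F F']
    [AddCommGroup W] [Module F W] (V : X → Submodule F W) (A : Finset X) :
    A.sup (fun i => (V i).baseChange F') = (A.sup V).baseChange F' := by
  classical
  induction A using Finset.induction_on with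
  | empty => simp
  | insert _ _ ha ih => simp [Finset.sup_insert, ih, baseChange_sup']

/-- Base change preserves the dimension of a subspace. -/
lemma finrank_baseChange_submodule {F F' W : Type*} [Field F] [Field F'] [Algebra F F']
    [AddCommGroup W] [Module F W] [FiniteDimensional F W] (p : Submodule F W) :
    finrank F' ↥(p.baseChange F') = finrank F ↥p := by
  obtain ⟨q, hq⟩ := p.exists_isCompl
  let π : W →ₗ[F] ↥p := p.linearProjOfIsCompl q hq
  have hrange : LinearMap.range (p.subtype.baseChange F') = p.baseChange F' := by
    apply le_antisymm
    · rintro x ⟨y, rfl⟩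
      induction y using TensorProduct.induction_on with
      | zero => simp
      | tmul a m => simpa using Submodule.tmul_mem_baseChange_of_mem a m.2
      | add u v hu hv => rw [map_add]; exact Submodule.add_mem _ hu hv
    · rw [Submodule.baseChange_eq_span, Submodule.span_le]
      rintro x hx
      simp only [SetLike.mem_coe, Submodule.mem_map] at hx
      obtain ⟨m, hm, rfl⟩ := hx
      exact ⟨(1 : F') ⊗ₜ (⟨m, hm⟩ : ↥p), by simp⟩
  have hcomp : (π.baseChange F').comp (p.subtype.baseChange F') = LinearMap.id := by
    rw [← LinearMap.baseChange_comp]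
    have : π.comp p.subtype = LinearMap.id := by
      ext x
      exact congrArg Subtype.val (Submodule.linearProjOfIsCompl_apply_left hq x)
    rw [this, LinearMap.baseChange_id]
  have upper : finrank F' ↥(p.baseChange F') ≤ finrank F ↥p := by
    rw [← hrange]
    calc finrank F' ↥(LinearMap.range (p.subtype.baseChange F'))
        ≤ finrank F' (F' ⊗[F] ↥p) := (p.subtype.baseChange F').finrank_range_le
      _ = finrank F ↥p := Module.finrank_baseChange
  have lower : finrank F ↥p ≤ finrank F' ↥(p.baseChange F') := by
    have hmap : Submodule.map (π.baseChange F') (p.baseChange F') = ⊤ := by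
      rw [← hrange, ← LinearMap.range_comp, hcomp, LinearMap.range_id]
    calc finrank F ↥p = finrank F' (F' ⊗[F] ↥p) := Module.finrank_baseChange.symm
      _ = finrank F' ↥(⊤ : Submodule F' (F' ⊗[F] ↥p)) := (finrank_top F' (F' ⊗[F] ↥p)).symm
      _ = finrank F' ↥(Submodule.map (π.baseChange F') (p.baseChange F')) := by rw [hmap]
      _ ≤ finrank F' ↥(p.baseChange F') := Submodule.finrank_map_le _ _
  exact le_antisymm upper lower

/-- Quotienting by the span of a vector not in `S` preserves `finrank S`. -/
lemma finrank_map_mkQ_of_not_mem {F W : Type*} [Field F] [AddCommGroup W] [Module F W]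
    [FiniteDimensional F W] (S : Submodule F W) {v : W} (hv : v ∉ S) :
    finrank F ↥(S.map (Submodule.span F {v}).mkQ) = finrank F ↥S := by
  set U := Submodule.span F {v} with hU
  set f := U.mkQ.comp S.subtype with hf
  have hrange : LinearMap.range f = S.map U.mkQ := by
    rw [hf, LinearMap.range_comp, Submodule.range_subtype]
  have hker : LinearMap.ker f = ⊥ := by
    rw [hf, LinearMap.ker_comp, Submodule.ker_mkQ]
    ext x
    simp only [Submodule.mem_comap, Submodule.coe_subtype, Submodule.mem_bot]
    constructor
    · intro hx
      obtain ⟨c, hc⟩ := Submodule.mem_span_singleton.mp hx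
      by_cases hc0 : c = 0
      · ext; simp [← hc, hc0]
      · exfalso
        apply hv
        have : v = c⁻¹ • (x : W) := by rw [← hc, smul_smul, inv_mul_cancel₀ hc0, one_smul]
        rw [this]
        exact S.smul_mem _ x.2
    · rintro rfl; simp
  have := f.finrank_range_add_finrank_ker
  rw [hrange, hker, finrank_bot, add_zero] at this
  exact this

/-- Quotienting by the span of a nonzero vector of `S` drops `finrank S` by one. -/
lemma finrank_map_mkQ_of_mem {F W : Type*} [Field F] [AddCommGroup W] [Module F W]
    [FiniteDimensional F W] (S : Submodule F W) {v : W} (hv : v ∈ S) (hv0 : v ≠ 0) :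
    finrank F ↥(S.map (Submodule.span F {v}).mkQ) + 1 = finrank F ↥S := by
  set U := Submodule.span F {v} with hU
  set f := U.mkQ.comp S.subtype with hf
  have hrange : LinearMap.range f = S.map U.mkQ := by
    rw [hf, LinearMap.range_comp, Submodule.range_subtype]
  have hUS : U ≤ S := by
    rw [hU, Submodule.span_le, Set.singleton_subset_iff]; exact hv
  have hker : LinearMap.ker f = Submodule.comap S.subtype U := by
    rw [hf, LinearMap.ker_comp, Submodule.ker_mkQ]
  have hker_rank : finrank F ↥(LinearMap.ker f) = 1 := by
    rw [hker, (Submodule.comapSubtypeEquivOfLe hUS).finrank_eq]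
    exact finrank_span_singleton hv0
  have := f.finrank_range_add_finrank_ker
  rw [hrange, hker_rank] at this
  exact this

/-- Over a sufficiently large finite field, one can avoid finitely many proper
subspaces of `T`. -/
lemma exists_avoid {F W : Type*} [Field F] [Fintype F] [AddCommGroup W] [Module F W]
    [FiniteDimensional F W] {ι : Type*} (s : Finset ι) (T : Submodule F W)
    (p : ι → Submodule F W) (hp : ∀ i ∈ s, p i < T) (hcard : s.card < Fintype.card F) :
    ∃ v ∈ T, ∀ i ∈ s, v ∉ p i := by
  classical
  rcases s.eq_empty_or_nonempty with rfl | ⟨i₀, hi₀⟩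
  · exact ⟨0, T.zero_mem, by simp⟩
  set P : ι → Submodule F ↥T := fun i => (p i).comap T.subtype with hP
  have hPlt : ∀ i ∈ s, P i < ⊤ := by
    intro i hi
    obtain ⟨x, hxT, hxp⟩ := SetLike.exists_of_lt (hp i hi)
    refine lt_top_iff_ne_top.mpr (fun htop => hxp ?_)
    have : (⟨x, hxT⟩ : ↥T) ∈ P i := htop ▸ Submodule.mem_top
    exact this
  letI : Fintype ↥T := Module.fintypeOfFintype (Module.finBasis F ↥T)
  set t := finrank F ↥T with ht
  have ht1 : 1 ≤ t := by
    have := Submodule.finrank_lt (K := F) (V := ↥T) (hPlt i₀ hi₀).ne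
    omega
  by_contra hcon
  push_neg at hcon
  have hsub : (Finset.univ : Finset ↥T) ⊆
      s.biUnion (fun i => Finset.univ.filter (fun x : ↥T => x ∈ P i)) := by
    intro x _
    obtain ⟨i, his, hxi⟩ := hcon x.1 x.2
    exact Finset.mem_biUnion.mpr ⟨i, his, by simp [hP, Submodule.mem_comap, hxi]⟩
  set q := Fintype.card F with hq
  have hbound : ∀ i ∈ s, (Finset.univ.filter (fun x : ↥T => x ∈ P i)).card ≤ q ^ (t - 1) := by
    intro i hi
    have h1 : (Finset.univ.filter (fun x : ↥T => x ∈ P i)).card = Fintype.card ↥(P i) := by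
      rw [Fintype.card_subtype]
    have h2 : Fintype.card ↥(P i) = q ^ finrank F ↥(P i) := Module.card_eq_pow_finrank
    have h3 : finrank F ↥(P i) ≤ t - 1 := by
      have := Submodule.finrank_lt (K := F) (V := ↥T) (hPlt i hi).ne
      omega
    rw [h1, h2]
    exact Nat.pow_le_pow_right Fintype.card_pos h3
  have hT_card : Fintype.card ↥T = q ^ t := Module.card_eq_pow_finrank
  have hchain : q ^ t ≤ s.card * q ^ (t - 1) := by
    calc q ^ t = Fintype.card ↥T := hT_card.symm
      _ = (Finset.univ : Finset ↥T).card := (Finset.card_univ).symm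
      _ ≤ (s.biUnion (fun i => Finset.univ.filter (fun x : ↥T => x ∈ P i))).card :=
          Finset.card_le_card hsub
      _ ≤ ∑ i ∈ s, (Finset.univ.filter (fun x : ↥T => x ∈ P i)).card :=
          Finset.card_biUnion_le
      _ ≤ ∑ _i ∈ s, q ^ (t - 1) := Finset.sum_le_sum hbound
      _ = s.card * q ^ (t - 1) := by rw [Finset.sum_const, smul_eq_mul]
  have hlt : s.card * q ^ (t - 1) < q * q ^ (t - 1) := by
    have hq0 : 0 < q ^ (t - 1) := pow_pos Fintype.card_pos _
    exact (Nat.mul_lt_mul_right hq0).mpr hcard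
  have : q * q ^ (t - 1) = q ^ t := by
    rw [← pow_succ']
    congr 1
    omega
  omega

/-- Every finite field admits a finite extension of cardinality bigger than `N`. -/
lemma exists_big_ext (F : Type) [Field F] [Fintype F] (N : ℕ) :
    ∃ (F' : Type) (_ : Field F') (_ : Fintype F'), ∃ _ : Algebra F F',
      N < Fintype.card F' := by
  classical
  obtain ⟨n, hp, hcard⟩ := FiniteField.card F (ringChar F)
  set q := Fintype.card F with hqdef
  set m := N + 1 with hm
  have hq1 : 1 < q := Fintype.one_lt_card
  have hdvd : (ringChar F) ∣ q ^ m := by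
    refine dvd_pow ?_ (by omega)
    rw [hcard]
    exact dvd_pow_self _ n.pos.ne'
  set g : Polynomial F := Polynomial.X ^ (q ^ m) - Polynomial.X with hg
  have hsep : g.Separable := galois_poly_separable (ringChar F) (q ^ m) hdvd
  let F' := g.SplittingField
  haveI : FiniteDimensional F F' := by infer_instance
  letI : Fintype F' := Module.fintypeOfFintype (Module.finBasis F F')
  have hdeg : g.natDegree = q ^ m :=
    FiniteField.X_pow_card_pow_sub_X_natDegree_eq F (by omega) hq1
  have hroots : Fintype.card (g.rootSet F') = q ^ m := by
    rw [Polynomial.card_rootSet_eq_natDegree hsep (Polynomial.SplittingField.splits g), hdeg]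
  have hle : q ^ m ≤ Fintype.card F' := by
    rw [← hroots]
    exact Fintype.card_le_of_injective _ Subtype.val_injective
  have hNlt : N < q ^ m := by
    calc N < 2 ^ N := Nat.lt_two_pow_self
      _ ≤ 2 ^ m := Nat.pow_le_pow_right (by omega) (by omega)
      _ ≤ q ^ m := Nat.pow_le_pow_left (by omega) m
  exact ⟨F', inferInstance, inferInstance, inferInstance, lt_of_lt_of_le hNlt hle⟩

lemma sup_prod_submodule {F W₁ W₂ : Type*} [Field F] [AddCommGroup W₁] [Module F W₁]
    [AddCommGroup W₂] [Module F W₂] (V₁ : X → Submodule F W₁) (V₂ : X → Submodule F W₂)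
    (A : Finset X) :
    A.sup (fun i => (V₁ i).prod (V₂ i)) = (A.sup V₁).prod (A.sup V₂) := by
  classical
  induction A using Finset.induction_on with
  | empty => simp [Submodule.prod_bot]
  | insert _ _ ha ih => simp [Finset.sup_insert, ih, Submodule.prod_sup_prod]

lemma finrank_prod_submodule {F W₁ W₂ : Type*} [Field F] [AddCommGroup W₁] [Module F W₁]
    [FiniteDimensional F W₁] [AddCommGroup W₂] [Module F W₂] [FiniteDimensional F W₂]
    (p : Submodule F W₁) (s : Submodule F W₂) :
    finrank F ↥(p.prod s) = finrank F ↥p + finrank F ↥s := by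
  rw [LinearMap.prod_eq_sup_map]
  have h1 : finrank F ↥(p.map (LinearMap.inl F W₁ W₂)) = finrank F ↥p :=
    (p.equivMapOfInjective _ LinearMap.inl_injective).finrank_eq.symm
  have h2 : finrank F ↥(s.map (LinearMap.inr F W₁ W₂)) = finrank F ↥s :=
    (s.equivMapOfInjective _ LinearMap.inr_injective).finrank_eq.symm
  have hinf : (p.map (LinearMap.inl F W₁ W₂)) ⊓ (s.map (LinearMap.inr F W₁ W₂)) = ⊥ := by
    rw [Submodule.map_inl, Submodule.map_inr, Submodule.prod_inf_prod, inf_bot_eq,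
      bot_inf_eq, Submodule.prod_bot]
  have := Submodule.finrank_sup_add_finrank_inf_eq
    (p.map (LinearMap.inl F W₁ W₂)) (s.map (LinearMap.inr F W₁ W₂))
  rw [hinf, finrank_bot, add_zero, h1, h2] at this
  exact this

/-- Scaling a representable rank function by a positive natural number. -/
lemma scale_representable [DecidableEq X] (h : Finset X → ℝ) (hr : IsRepresentable h)
    (n : ℕ) : IsRepresentable (fun A => ((n : ℝ) + 1) * h A) := by
  obtain ⟨r⟩ := hr
  letI := r.fieldF; letI := r.fintypeF; letI := r.addCommGroupW
  letI := r.moduleW; letI := r.finiteDimensionalW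
  have key : ∀ n : ℕ, ∃ (W' : Type) (_ : AddCommGroup W') (_ : Module r.F W')
      (_ : FiniteDimensional r.F W') (V' : X → Submodule r.F W'),
      ∀ A : Finset X, finrank r.F ↥(A.sup V') = (n + 1) * finrank r.F ↥(A.sup r.V) := by
    intro n
    induction n with
    | zero => exact ⟨r.W, inferInstance, inferInstance, inferInstance, r.V,
        fun A => by simp⟩
    | succ n ih =>
      obtain ⟨W', _, _, _, V', hV'⟩ := ih
      refine ⟨W' × r.W, inferInstance, inferInstance, inferInstance,
        fun i => (V' i).prod (r.V i), fun A => ?_⟩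
      rw [sup_prod_submodule, finrank_prod_submodule, hV']
      ring
  obtain ⟨W', _, _, _, V', hV'⟩ := key n
  refine ⟨⟨r.F, W', V', fun A => ?_⟩⟩
  rw [hV', r.rank_eq A]
  push_cast
  ring

/-- One-step truncation: chop off the top rank by one. -/
lemma one_step_trunc [Fintype X] [DecidableEq X] (h : Finset X → ℝ)
    (hr : IsRepresentable h) (h1 : 1 ≤ h Finset.univ) :
    IsRepresentable (fun A => min (h A) (h Finset.univ - 1)) := by
  classical
  obtain ⟨r⟩ := hr
  letI := r.fieldF; letI := r.fintypeF; letI := r.addCommGroupW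
  letI := r.moduleW; letI := r.finiteDimensionalW
  obtain ⟨F', iF, iFt, iAlg, hbig⟩ := exists_big_ext r.F (Fintype.card (Finset X))
  letI := iF; letI := iFt; letI := iAlg
  set V₂ : X → Submodule F' (F' ⊗[r.F] r.W) := fun i => (r.V i).baseChange F' with hV₂
  have hsupV₂ : ∀ A : Finset X, A.sup V₂ = (A.sup r.V).baseChange F' := fun A =>
    sup_baseChange r.V A
  have hrank : ∀ A : Finset X, h A = (finrank F' ↥(A.sup V₂) : ℝ) := by
    intro A
    rw [hsupV₂, finrank_baseChange_submodule]
    exact r.rank_eq A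
  set T := (Finset.univ : Finset X).sup V₂ with hT
  have htpos : 1 ≤ finrank F' ↥T := by
    have h2 := hrank Finset.univ
    rw [h2] at h1
    exact_mod_cast h1
  obtain ⟨v, hvT, hv⟩ := exists_avoid
    (Finset.univ.filter (fun A : Finset X => A.sup V₂ < T)) T (fun A => A.sup V₂)
    (fun A hA => (Finset.mem_filter.mp hA).2)
    (lt_of_le_of_lt (le_trans (Finset.card_filter_le _ _) (le_of_eq Finset.card_univ)) hbig)
  have hTbot : T ≠ ⊥ := by
    intro h0
    rw [h0, finrank_bot] at htpos
    omega
  have hv0 : v ≠ 0 := by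
    intro h0
    have hbotT : (∅ : Finset X).sup V₂ < T := by
      rw [Finset.sup_empty]
      exact bot_lt_iff_ne_bot.mpr hTbot
    have := hv ∅ (Finset.mem_filter.mpr ⟨Finset.mem_univ _, hbotT⟩)
    apply this
    rw [Finset.sup_empty, h0]
    exact Submodule.zero_mem _
  set U := Submodule.span F' {v} with hU
  refine ⟨⟨F', (F' ⊗[r.F] r.W) ⧸ U, fun i => (V₂ i).map U.mkQ, fun A => ?_⟩⟩
  have hmap : A.sup (fun i => (V₂ i).map U.mkQ) = (A.sup V₂).map U.mkQ :=
    sup_submodule_map U.mkQ V₂ A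
  rw [hmap]
  by_cases hA : A.sup V₂ = T
  · have hdrop : finrank F' ↥((A.sup V₂).map U.mkQ) + 1 = finrank F' ↥T := by
      rw [hA]
      exact finrank_map_mkQ_of_mem T hvT hv0
    have hhA : h A = h Finset.univ := by
      rw [hrank A, hrank Finset.univ, ← hT, hA]
    have hcast : (finrank F' ↥((A.sup V₂).map U.mkQ) : ℝ) = (finrank F' ↥T : ℝ) - 1 := by
      have := congrArg (fun n : ℕ => (n : ℝ)) hdrop
      push_cast at this
      linarith
    rw [hhA, min_eq_right (by linarith), hrank Finset.univ, ← hT, hcast]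
  · have hlt : A.sup V₂ < T :=
      lt_of_le_of_ne (Finset.sup_mono (Finset.subset_univ A)) hA
    have hnotmem : v ∉ A.sup V₂ := hv A (Finset.mem_filter.mpr ⟨Finset.mem_univ _, hlt⟩)
    have heq : finrank F' ↥((A.sup V₂).map U.mkQ) = finrank F' ↥(A.sup V₂) :=
      finrank_map_mkQ_of_not_mem _ hnotmem
    have hlt2 : finrank F' ↥(A.sup V₂) < finrank F' ↥T :=
      Submodule.finrank_lt_finrank_of_lt hlt
    have hle : (finrank F' ↥(A.sup V₂) : ℝ) + 1 ≤ (finrank F' ↥T : ℝ) := by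
      exact_mod_cast hlt2
    rw [heq, ← hrank A]
    refine min_eq_left ?_
    have hAv : h A = (finrank F' ↥(A.sup V₂) : ℝ) := hrank A
    have hUv : h Finset.univ = (finrank F' ↥T : ℝ) := by rw [hrank Finset.univ, ← hT]
    linarith

/-- Truncation by a natural number `k ≤ h(X)` preserves representability. -/
lemma trunc_representable [Fintype X] [DecidableEq X] (h : Finset X → ℝ)
    (hr : IsRepresentable h) :
    ∀ k : ℕ, (k : ℝ) ≤ h Finset.univ →
      IsRepresentable (fun A => min (h A) (h Finset.univ - (k : ℝ))) := by
  intro k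
  induction k with
  | zero =>
    intro _
    have hmono : ∀ A : Finset X, h A ≤ h Finset.univ := by
      obtain ⟨r⟩ := hr
      letI := r.fieldF; letI := r.fintypeF; letI := r.addCommGroupW
      letI := r.moduleW; letI := r.finiteDimensionalW
      intro A
      rw [r.rank_eq A, r.rank_eq Finset.univ]
      exact_mod_cast Submodule.finrank_mono (Finset.sup_mono (Finset.subset_univ A))
    have : (fun A : Finset X => min (h A) (h Finset.univ - (0 : ℕ))) = h := by
      funext A
      push_cast
      rw [sub_zero]
      exact min_eq_left (hmono A)
    rw [this]
    exact hr
  | succ k ih =>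
    intro hk
    have hk' : (k : ℝ) ≤ h Finset.univ := by push_cast at hk ⊢; linarith
    have hg := ih hk'
    set g : Finset X → ℝ := fun A => min (h A) (h Finset.univ - (k : ℝ)) with hgdef
    have hg_univ : g Finset.univ = h Finset.univ - (k : ℝ) := by
      rw [hgdef]
      exact min_eq_right (by push_cast at hk; linarith)
    have h1g : 1 ≤ g Finset.univ := by
      rw [hg_univ]
      push_cast at hk
      linarith
    have := one_step_trunc g hg h1g
    have heq : (fun A => min (g A) (g Finset.univ - 1)) =
        (fun A : Finset X => min (h A) (h Finset.univ - ((k : ℕ) + 1 : ℕ))) := by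
      funext A
      rw [hg_univ, hgdef]
      simp only
      rw [min_assoc, min_eq_right (show h Finset.univ - (k : ℝ) - 1 ≤
        h Finset.univ - (k : ℝ) by linarith)]
      congr 1
      push_cast
      ring
    rw [heq] at this
    exact this

end PerturbAux

/-- the ε-perturbation `g_ε(A) := min(h(A), h(X) − ε)` of a representable
polymatroid `(X, h)` with `0 ≤ ε ≤ h(X)` is almost representable, and it is
representable whenever `ε` is a nonnegative integer. -/
theorem perturbation_of_representable {X : Type} [Fintype X] [DecidableEq X]
    (h : Finset X → ℝ) (hpoly : IsPolymatroid h) (hrep : IsRepresentable h)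
    (ε : ℝ) (hε0 : 0 ≤ ε) (hε1 : ε ≤ h Finset.univ) :
    AlmostRepresentable (fun A => min (h A) (h Finset.univ - ε)) ∧
    ((∃ k : ℕ, ε = (k : ℝ)) →
      IsRepresentable (fun A => min (h A) (h Finset.univ - ε))) := by
  constructor
  · -- almost representable
    set hU := h Finset.univ with hUdef
    set e : ℕ → ℝ := fun i => (⌊((i : ℝ) + 1) * ε⌋₊ : ℝ) / ((i : ℝ) + 1) with hedef
    have hpos : ∀ i : ℕ, (0 : ℝ) < (i : ℝ) + 1 := fun i => by positivity
    have hfl_le : ∀ i : ℕ, (⌊((i : ℝ) + 1) * ε⌋₊ : ℝ) ≤ ((i : ℝ) + 1) * ε := fun i =>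
      Nat.floor_le (by positivity)
    refine ⟨fun i => fun A => min (((i : ℝ) + 1) * h A)
        (((i : ℝ) + 1) * hU - (⌊((i : ℝ) + 1) * ε⌋₊ : ℝ)),
      fun i => 1 / ((i : ℝ) + 1), ?_, ?_, ?_⟩
    · intro i
      have hs := scale_representable h hrep i
      have hcond : ((⌊((i : ℝ) + 1) * ε⌋₊ : ℕ) : ℝ) ≤
          (fun A : Finset X => ((i : ℝ) + 1) * h A) Finset.univ := by
        simp only
        calc ((⌊((i : ℝ) + 1) * ε⌋₊ : ℕ) : ℝ) ≤ ((i : ℝ) + 1) * ε := hfl_le i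
          _ ≤ ((i : ℝ) + 1) * h Finset.univ :=
            mul_le_mul_of_nonneg_left hε1 (le_of_lt (hpos i))
      exact trunc_representable _ hs _ hcond
    · intro i
      exact by positivity
    · intro A
      have hkey : ∀ i : ℕ, (1 / ((i : ℝ) + 1)) *
          min (((i : ℝ) + 1) * h A) (((i : ℝ) + 1) * hU - (⌊((i : ℝ) + 1) * ε⌋₊ : ℝ)) =
          min (h A) (hU - e i) := by
        intro i
        rw [mul_min_of_nonneg _ _ (by positivity : (0:ℝ) ≤ 1 / ((i : ℝ) + 1))]
        have hne : ((i : ℝ) + 1) ≠ 0 := ne_of_gt (hpos i)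
        congr 1
        · field_simp
        · rw [hedef]
          field_simp
      have hfun : (fun i : ℕ => (1 / ((i : ℝ) + 1)) *
          min (((i : ℝ) + 1) * h A) (((i : ℝ) + 1) * hU - (⌊((i : ℝ) + 1) * ε⌋₊ : ℝ))) =
          fun i : ℕ => min (h A) (hU - e i) := funext hkey
      rw [hfun]
      have he_tendsto : Tendsto e atTop (𝓝 ε) := by
        have hlow : Tendsto (fun i : ℕ => ε - 1 / ((i : ℝ) + 1)) atTop (𝓝 ε) := by
          have h2 := (tendsto_const_nhds : Tendsto (fun _ : ℕ => ε) atTop (𝓝 ε)).sub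
            tendsto_one_div_add_atTop_nhds_zero_nat
          simpa using h2
        refine tendsto_of_tendsto_of_tendsto_of_le_of_le hlow
          (tendsto_const_nhds : Tendsto (fun _ : ℕ => ε) atTop (𝓝 ε)) ?_ ?_
        · intro i
          have hne : ((i : ℝ) + 1) ≠ 0 := ne_of_gt (hpos i)
          have h1 : ((i : ℝ) + 1) * ε - 1 ≤ (⌊((i : ℝ) + 1) * ε⌋₊ : ℝ) :=
            (Nat.sub_one_lt_floor _).le
          rw [hedef]
          simp only
          rw [le_div_iff₀ (hpos i)]
          have hexp : (ε - 1 / ((i : ℝ) + 1)) * ((i : ℝ) + 1) = ((i : ℝ) + 1) * ε - 1 := by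
            field_simp
          rw [hexp]
          exact h1
        · intro i
          rw [hedef]
          simp only
          rw [div_le_iff₀ (hpos i)]
          calc (⌊((i : ℝ) + 1) * ε⌋₊ : ℝ) ≤ ((i : ℝ) + 1) * ε := hfl_le i
            _ = ε * ((i : ℝ) + 1) := by ring
      exact (tendsto_const_nhds : Tendsto (fun _ : ℕ => h A) atTop (𝓝 (h A))).min
        ((tendsto_const_nhds : Tendsto (fun _ : ℕ => hU) atTop (𝓝 hU)).sub he_tendsto)
  · rintro ⟨k, rfl⟩
    exact trunc_representable h hrep k hε1
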